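/- Let f : 𝕋 → ℂ be a continuous injective map whose image is horizontally convex, in the equivalent sense that there exist θ₁ < θ₂ < θ₁ + 2π such that the function θ ↦ Im f(e^{iθ}) is monotone on [θ₁, θ₂] and monotone on [θ₂, θ₁ + 2π]. Then |f̂(−1)| + |f̂(1)| > 0. -/

import Mathlib

open Complex MeasureTheory intervalIntegral

noncomputable def fCoeff (f : ℂ → ℂ) (n : ℤ) : ℂ :=
  (1 / (2 * Real.pi) : ℂ) * ∫ θ in (0:ℝ)..(2 * Real.pi),
    f (Complex.exp (θ * Complex.I)) * Complex.exp (-(n : ℂ) * θ * Complex.I)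

/-- A function is monotone on a set if it is monotone nondecreasing or nonincreasing. -/
def MonotoneOnEither (g : ℝ → ℝ) (s : Set ℝ) : Prop :=
  MonotoneOn g s ∨ AntitoneOn g s

section Aux

open Set Real

lemma eq_zero_of_integral_zero {h : ℝ → ℝ} (hc : Continuous h) {a b : ℝ} (hab : a < b)
    (hnn : ∀ x ∈ Icc a b, 0 ≤ h x) (hz : (∫ x in a..b, h x) = 0) :
    ∀ x ∈ Icc a b, h x = 0 := by
  intro x₀ hx₀
  by_contra hne
  have hpos : 0 < h x₀ := lt_of_le_of_ne (hnn x₀ hx₀) (Ne.symm hne)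
  obtain ⟨δ, hδ, hδ'⟩ := Metric.continuousAt_iff.mp hc.continuousAt (h x₀ / 2) (by linarith)
  set c := max a (x₀ - δ/2) with hc_def
  set d := min b (x₀ + δ/2) with hd_def
  have hacd : a ≤ c := le_max_left _ _
  have hdb : d ≤ b := min_le_left _ _
  have hcd : c < d := by
    rcases hx₀ with ⟨h1, h2⟩
    simp only [hc_def, hd_def, max_lt_iff, lt_min_iff]
    constructor <;> constructor <;> linarith
  have hsub : ∀ y ∈ Ioo c d, 0 < h y := by
    intro y hy
    have h1 : x₀ - δ/2 ≤ c := le_max_right _ _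
    have h2 : d ≤ x₀ + δ/2 := min_le_right _ _
    have : dist y x₀ < δ := by
      rw [Real.dist_eq, abs_lt]
      rcases hy with ⟨hy1, hy2⟩
      constructor <;> linarith
    have := hδ' this
    rw [Real.dist_eq, abs_lt] at this
    linarith [this.1]
  have hIcd : 0 < ∫ x in c..d, h x :=
    intervalIntegral_pos_of_pos_on (hc.intervalIntegrable _ _) hsub hcd
  have h1 : 0 ≤ ∫ x in a..c, h x := by
    apply intervalIntegral.integral_nonneg hacd
    intro u hu; exact hnn u ⟨hu.1, le_trans hu.2 (le_trans hcd.le hdb)⟩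
  have h2 : 0 ≤ ∫ x in d..b, h x := by
    apply intervalIntegral.integral_nonneg hdb
    intro u hu; exact hnn u ⟨le_trans (le_trans hacd hcd.le) hu.1, hu.2⟩
  have hsplit : (∫ x in a..b, h x) = (∫ x in a..c, h x) + (∫ x in c..d, h x) + ∫ x in d..b, h x := by
    rw [integral_add_adjacent_intervals (hc.intervalIntegrable _ _) (hc.intervalIntegrable _ _),
      integral_add_adjacent_intervals (hc.intervalIntegrable _ _) (hc.intervalIntegrable _ _)]
  rw [hsplit] at hz
  linarith

lemma no_circle_embed_aux {h : ℝ → ℝ} {a T : ℝ} (hT : 0 < T) (hc : Continuous h)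
    (hper : h (a + T) = h a) (hlt : h a < h (a + T/2))
    (hinj : ∀ s ∈ Ico a (a+T), ∀ t ∈ Ico a (a+T), h s = h t → s = t) : False := by
  set v := (h a + h (a + T/2)) / 2 with hv
  have hv1 : h a < v := by rw [hv]; linarith
  have hv2 : v < h (a + T/2) := by rw [hv]; linarith
  have hs1 : ∃ s ∈ Ioo a (a + T/2), h s = v := by
    have := intermediate_value_Ioo (by linarith : a ≤ a + T/2) hc.continuousOn
    exact this ⟨hv1, hv2⟩
  have hs2 : ∃ s ∈ Ioo (a + T/2) (a + T), h s = v := by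
    have := intermediate_value_Ioo' (by linarith : a + T/2 ≤ a + T) hc.continuousOn
    exact this ⟨by rw [hper]; exact hv1, hv2⟩
  obtain ⟨s₁, hs₁, hvs₁⟩ := hs1
  obtain ⟨s₂, hs₂, hvs₂⟩ := hs2
  have : s₁ = s₂ := hinj s₁ ⟨hs₁.1.le, by linarith [hs₁.2]⟩ s₂ ⟨by linarith [hs₂.1], hs₂.2⟩
    (by rw [hvs₁, hvs₂])
  linarith [hs₁.2, hs₂.1]

lemma no_circle_embed {h : ℝ → ℝ} {a T : ℝ} (hT : 0 < T) (hc : Continuous h)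
    (hper : h (a + T) = h a)
    (hinj : ∀ s ∈ Ico a (a+T), ∀ t ∈ Ico a (a+T), h s = h t → s = t) : False := by
  have hmem1 : a ∈ Ico a (a+T) := ⟨le_refl _, by linarith⟩
  have hmem2 : a + T/2 ∈ Ico a (a+T) := ⟨by linarith, by linarith⟩
  rcases lt_trichotomy (h a) (h (a + T/2)) with hlt | heq | hgt
  · exact no_circle_embed_aux hT hc hper hlt hinj
  · have := hinj a hmem1 (a + T/2) hmem2 heq
    linarith
  · exact no_circle_embed_aux hT (hc.neg) (by simp [hper])
      (by simpa using hgt)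
      (fun s hs t ht hst => hinj s hs t ht (by simpa using hst))

lemma const_of_monomono {g : ℝ → ℝ} {a b c : ℝ} (hab : a ≤ b) (hbc : b ≤ c)
    (h1 : MonotoneOn g (Icc a b)) (h2 : MonotoneOn g (Icc b c)) (hca : g c = g a) :
    ∀ θ ∈ Icc a c, g θ = g a := by
  have hba : g a ≤ g b := h1 ⟨le_refl _, hab⟩ ⟨hab, le_refl _⟩ hab
  have hcb : g b ≤ g c := h2 ⟨le_refl _, hbc⟩ ⟨hbc, le_refl _⟩ hbc
  intro θ hθ
  rcases le_total θ b with h | h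
  · have l1 : g a ≤ g θ := h1 ⟨le_refl _, hab⟩ ⟨hθ.1, h⟩ hθ.1
    have l2 : g θ ≤ g b := h1 ⟨hθ.1, h⟩ ⟨hab, le_refl _⟩ h
    linarith
  · have l1 : g b ≤ g θ := h2 ⟨le_refl _, hbc⟩ ⟨h, hθ.2⟩ h
    have l2 : g θ ≤ g c := h2 ⟨h, hθ.2⟩ ⟨hbc, le_refl _⟩ hθ.2
    linarith

lemma const_of_updown {g : ℝ → ℝ} (hg : Continuous g) {a b : ℝ} (hab : a < b)
    (hb2 : b < a + 2 * π)
    (h1 : MonotoneOn g (Icc a b)) (h2 : AntitoneOn g (Icc b (a + 2 * π)))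
    (hI : (∫ θ in a..(a + 2 * π), g θ * Real.sin (θ - (a+b)/2)) = 0) :
    ∀ θ ∈ Icc a (a + 2 * π), g θ = g b := by
  have hπ := Real.pi_pos
  set m := (a+b)/2 with hm
  set m' := m + π with hm'
  have ham : a < m := by rw [hm]; linarith
  have hmb : m < b := by rw [hm]; linarith
  have hbm' : b < m' := by rw [hm', hm]; linarith
  have hm'2 : m' < a + 2 * π := by rw [hm', hm]; linarith
  set h : ℝ → ℝ := fun θ => (g m - g θ) * (-Real.sin (θ - m)) with hh
  set k : ℝ → ℝ := fun θ => (g m' - g θ) * (-Real.sin (θ - m)) with hk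
  have hcsin : Continuous (fun θ : ℝ => Real.sin (θ - m)) := by fun_prop
  have hhc : Continuous h := by
    apply Continuous.mul
    · exact continuous_const.sub hg
    · exact hcsin.neg
  have hkc : Continuous k := by
    apply Continuous.mul
    · exact continuous_const.sub hg
    · exact hcsin.neg
  have hmmem : m ∈ Icc a b := ⟨ham.le, hmb.le⟩
  have hm'mem : m' ∈ Icc b (a + 2*π) := ⟨hbm'.le, hm'2.le⟩
  have hhnn : ∀ θ ∈ Icc a b, 0 ≤ h θ := by
    intro θ hθ
    rcases le_total θ m with hθm | hθm
    · have hg1 : g θ ≤ g m := h1 hθ hmmem hθm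
      have hs : Real.sin (θ - m) ≤ 0 :=
        Real.sin_nonpos_of_nonpos_of_neg_pi_le (by linarith [hθ.1]) (by linarith [hθ.1])
      rw [hh]; dsimp only
      have : 0 ≤ -Real.sin (θ - m) := by linarith
      exact mul_nonneg (by linarith) this
    · have hg1 : g m ≤ g θ := h1 hmmem hθ hθm
      have hs : 0 ≤ Real.sin (θ - m) :=
        Real.sin_nonneg_of_nonneg_of_le_pi (by linarith) (by linarith [hθ.2])
      rw [hh]; dsimp only
      nlinarith
  have hknn : ∀ θ ∈ Icc b (a + 2*π), 0 ≤ k θ := by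
    intro θ hθ
    rcases le_total θ m' with hθm | hθm
    · have hg1 : g m' ≤ g θ := h2 hθ hm'mem hθm
      have hs : 0 ≤ Real.sin (θ - m) :=
        Real.sin_nonneg_of_nonneg_of_le_pi (by linarith [hθ.1]) (by rw [hm'] at hθm; linarith)
      rw [hk]; dsimp only
      nlinarith
    · have hg1 : g θ ≤ g m' := h2 hm'mem hθ hθm
      have hs : Real.sin (θ - m) ≤ 0 := by
        have : Real.sin ((θ - m) - π) = -Real.sin (θ - m) := Real.sin_sub_pi _
        have h2' : 0 ≤ Real.sin ((θ - m) - π) :=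
          Real.sin_nonneg_of_nonneg_of_le_pi (by rw [hm'] at hθm; linarith)
            (by linarith [hθ.2])
        linarith
      rw [hk]; dsimp only
      exact mul_nonneg (by linarith) (by linarith)
  have hprim : ∀ u v : ℝ, (∫ θ in u..v, -Real.sin (θ - m)) = Real.cos (v - m) - Real.cos (u - m) := by
    intro u v
    have : ∀ θ ∈ uIcc u v, HasDerivAt (fun x => Real.cos (x - m)) (-Real.sin (θ - m)) θ := by
      intro θ _
      have := (Real.hasDerivAt_cos (θ - m)).comp θ ((hasDerivAt_id θ).sub_const m)
      simp at this; exact this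
    rw [intervalIntegral.integral_eq_sub_of_hasDerivAt this
      (hcsin.neg.intervalIntegrable _ _)]
  have hWab : (∫ θ in a..b, -Real.sin (θ - m)) = 0 := by
    rw [hprim]
    have e1 : b - m = (b-a)/2 := by rw [hm]; ring
    have e2 : a - m = -((b-a)/2) := by rw [hm]; ring
    rw [e1, e2, Real.cos_neg]; ring
  have hWb2 : (∫ θ in b..(a + 2*π), -Real.sin (θ - m)) = 0 := by
    rw [hprim]
    have e1 : a + 2*π - m = -((b-a)/2) + 2*π := by rw [hm]; ring
    have e2 : b - m = (b-a)/2 := by rw [hm]; ring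
    rw [e1, e2, Real.cos_add_two_pi, Real.cos_neg]; ring
  have hgint : ∀ u v : ℝ, IntervalIntegrable (fun θ => g θ * Real.sin (θ - m)) MeasureTheory.volume u v :=
    fun u v => (hg.mul hcsin).intervalIntegrable u v
  have hIh : (∫ θ in a..b, h θ) = ∫ θ in a..b, g θ * Real.sin (θ - m) := by
    have : h = fun θ => g m * (-Real.sin (θ - m)) - (- (g θ * Real.sin (θ - m))) := by
      funext θ; rw [hh]; ring
    rw [this, intervalIntegral.integral_sub (f := fun θ => g m * (-Real.sin (θ - m))) (g := fun θ => -(g θ * Real.sin (θ - m)))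
      ((continuous_const.mul hcsin.neg).intervalIntegrable _ _)
      ((hg.mul hcsin).neg.intervalIntegrable _ _),
      intervalIntegral.integral_const_mul, hWab, intervalIntegral.integral_neg]
    ring
  have hIk : (∫ θ in b..(a + 2*π), k θ) = ∫ θ in b..(a + 2*π), g θ * Real.sin (θ - m) := by
    have : k = fun θ => g m' * (-Real.sin (θ - m)) - (- (g θ * Real.sin (θ - m))) := by
      funext θ; rw [hk]; ring
    rw [this, intervalIntegral.integral_sub (f := fun θ => g m' * (-Real.sin (θ - m))) (g := fun θ => -(g θ * Real.sin (θ - m)))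
      ((continuous_const.mul hcsin.neg).intervalIntegrable _ _)
      ((hg.mul hcsin).neg.intervalIntegrable _ _),
      intervalIntegral.integral_const_mul, hWb2, intervalIntegral.integral_neg]
    ring
  have hsum : (∫ θ in a..b, h θ) + (∫ θ in b..(a + 2*π), k θ) = 0 := by
    rw [hIh, hIk, intervalIntegral.integral_add_adjacent_intervals (hgint a b) (hgint b _)]
    exact hI
  have hIh0 : (∫ θ in a..b, h θ) = 0 := by
    have p1 : 0 ≤ (∫ θ in a..b, h θ) := intervalIntegral.integral_nonneg hab.le hhnn
    have p2 : 0 ≤ (∫ θ in b..(a + 2*π), k θ) := intervalIntegral.integral_nonneg hb2.le hknn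
    linarith
  have hIk0 : (∫ θ in b..(a + 2*π), k θ) = 0 := by
    have p1 : 0 ≤ (∫ θ in a..b, h θ) := intervalIntegral.integral_nonneg hab.le hhnn
    linarith
  have hhz := eq_zero_of_integral_zero hhc hab hhnn hIh0
  have hkz := eq_zero_of_integral_zero hkc hb2 hknn hIk0
  have hgab : ∀ θ ∈ Icc a b, g θ = g m := by
    intro θ hθ
    rcases eq_or_ne θ m with rfl | hne
    · rfl
    · have := hhz θ hθ
      rw [hh] at this; dsimp only at this
      have hl1 : -π < θ - m := by linarith [hθ.1]
      have hl2 : θ - m < π := by linarith [hθ.2]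
      have hs : Real.sin (θ - m) ≠ 0 := by
        intro hcon
        rw [Real.sin_eq_zero_iff_of_lt_of_lt hl1 hl2] at hcon
        apply hne; linarith
      rcases mul_eq_zero.mp this with h' | h'
      · linarith
      · exact absurd (by linarith : Real.sin (θ - m) = 0) hs
  have hgb2 : ∀ θ ∈ Icc b (a + 2*π), g θ = g m' := by
    intro θ hθ
    rcases eq_or_ne θ m' with rfl | hne
    · rfl
    · have := hkz θ hθ
      rw [hk] at this; dsimp only at this
      have hl1 : -π < (θ - m) - π := by
        have h1 := hθ.1
        have : b - m > 0 := by linarith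
        linarith
      have hl2 : (θ - m) - π < π := by linarith [hθ.2]
      have hs : Real.sin (θ - m) ≠ 0 := by
        intro hcon
        have hzz : Real.sin ((θ - m) - π) = 0 := by rw [Real.sin_sub_pi, hcon, neg_zero]
        rw [Real.sin_eq_zero_iff_of_lt_of_lt hl1 hl2] at hzz
        apply hne; linarith
      rcases mul_eq_zero.mp this with h' | h'
      · linarith
      · exact absurd (by linarith : Real.sin (θ - m) = 0) hs
  have hbm : g b = g m := hgab b ⟨hab.le, le_refl _⟩
  have hbm'' : g b = g m' := hgb2 b ⟨le_refl _, by linarith⟩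
  intro θ hθ
  rcases le_total θ b with hθb | hθb
  · rw [hgab θ ⟨hθ.1, hθb⟩, hbm]
  · rw [hgb2 θ ⟨hθb, hθ.2⟩, hbm'']

end Aux

open Real in
/-- a circle embedding with horizontally convex image has
`|f̂(−1)| + |f̂(1)| > 0`. -/
theorem horizontally_convex_nonvanishing
    (f : ℂ → ℂ)
    (hcont : ContinuousOn f (Metric.sphere (0 : ℂ) 1))
    (hinj : Set.InjOn f (Metric.sphere (0 : ℂ) 1))
    (hconv : ∃ θ₁ θ₂ : ℝ, θ₁ < θ₂ ∧ θ₂ < θ₁ + 2 * Real.pi ∧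
      MonotoneOnEither (fun θ => (f (Complex.exp (θ * Complex.I))).im) (Set.Icc θ₁ θ₂) ∧
      MonotoneOnEither (fun θ => (f (Complex.exp (θ * Complex.I))).im)
        (Set.Icc θ₂ (θ₁ + 2 * Real.pi))) :
    0 < ‖fCoeff f (-1)‖ + ‖fCoeff f 1‖ := by
  by_contra hcon
  push_neg at hcon
  have hn1 := norm_nonneg (fCoeff f (-1))
  have hn2 := norm_nonneg (fCoeff f 1)
  have h1 : fCoeff f 1 = 0 := by rw [← norm_eq_zero]; linarith
  have hm1 : fCoeff f (-1) = 0 := by rw [← norm_eq_zero]; linarith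
  have hπ := Real.pi_pos
  -- basic objects
  set F : ℝ → ℂ := fun θ => f (Complex.exp (θ * Complex.I)) with hF
  have hmem : ∀ θ : ℝ, Complex.exp (θ * Complex.I) ∈ Metric.sphere (0 : ℂ) 1 := by
    intro θ
    simp [Complex.norm_exp_ofReal_mul_I]
  have hecont : Continuous (fun θ : ℝ => Complex.exp (θ * Complex.I)) :=
    (Complex.continuous_ofReal.mul continuous_const).cexp
  have hFc : Continuous F := hcont.comp_continuous hecont hmem
  set g : ℝ → ℝ := fun θ => (F θ).im with hgdef
  set r : ℝ → ℝ := fun θ => (F θ).re with hrdef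
  have hgc : Continuous g := Complex.continuous_im.comp hFc
  have hrc : Continuous r := Complex.continuous_re.comp hFc
  have hexp : ∀ θ : ℝ, Complex.exp (↑(θ + 2*π) * Complex.I) = Complex.exp (θ * Complex.I) := by
    intro θ
    rw [Complex.exp_eq_exp_iff_exists_int]
    exact ⟨1, by push_cast; ring⟩
  have hFper : ∀ θ : ℝ, F (θ + 2*π) = F θ := by
    intro θ; rw [hF]; dsimp only; rw [hexp]
  have gper : Function.Periodic g (2*π) := fun θ => by
    rw [hgdef]; dsimp only; rw [hFper]
  -- extract vanishing of the two real Fourier integrals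
  have h2π : ((2 * π : ℝ) : ℂ) ≠ 0 :=
    Complex.ofReal_ne_zero.mpr (by positivity)
  have hfac : (1 / (2 * Real.pi) : ℂ) ≠ 0 := by
    apply one_div_ne_zero
    intro hc
    apply h2π
    rw [← hc]; push_cast; ring
  have hint1 : (∫ θ in (0:ℝ)..(2*π), F θ * Complex.exp (-((1:ℤ) : ℂ) * θ * Complex.I)) = 0 := by
    have h' := h1
    rw [fCoeff] at h'
    rcases mul_eq_zero.mp h' with h'' | h''
    · exact absurd h'' hfac
    · exact h''
  have hintm1 : (∫ θ in (0:ℝ)..(2*π), F θ * Complex.exp (-((-1:ℤ) : ℂ) * θ * Complex.I)) = 0 := by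
    have h' := hm1
    rw [fCoeff] at h'
    rcases mul_eq_zero.mp h' with h'' | h''
    · exact absurd h'' hfac
    · exact h''
  -- pointwise re/im decompositions
  have he1 : ∀ θ : ℝ, Complex.exp (-((1:ℤ) : ℂ) * θ * Complex.I)
      = Complex.exp (((-θ : ℝ) : ℂ) * Complex.I) := by
    intro θ; congr 1; push_cast; ring
  have he2 : ∀ θ : ℝ, Complex.exp (-((-1:ℤ) : ℂ) * θ * Complex.I)
      = Complex.exp (((θ : ℝ) : ℂ) * Complex.I) := by
    intro θ; congr 1; push_cast; ring
  have hE1im : ∀ θ : ℝ, (F θ * Complex.exp (-((1:ℤ) : ℂ) * θ * Complex.I)).im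
      = g θ * Real.cos θ - r θ * Real.sin θ := by
    intro θ
    rw [he1, Complex.mul_im, Complex.exp_ofReal_mul_I_re, Complex.exp_ofReal_mul_I_im,
      Real.cos_neg, Real.sin_neg]
    all_goals (rw [hgdef, hrdef]; dsimp only; ring)
  have hE1re : ∀ θ : ℝ, (F θ * Complex.exp (-((1:ℤ) : ℂ) * θ * Complex.I)).re
      = r θ * Real.cos θ + g θ * Real.sin θ := by
    intro θ
    rw [he1, Complex.mul_re, Complex.exp_ofReal_mul_I_re, Complex.exp_ofReal_mul_I_im,
      Real.cos_neg, Real.sin_neg]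
    all_goals (rw [hgdef, hrdef]; dsimp only; ring)
  have hE2im : ∀ θ : ℝ, (F θ * Complex.exp (-((-1:ℤ) : ℂ) * θ * Complex.I)).im
      = g θ * Real.cos θ + r θ * Real.sin θ := by
    intro θ
    rw [he2, Complex.mul_im, Complex.exp_ofReal_mul_I_re, Complex.exp_ofReal_mul_I_im]
    all_goals (rw [hgdef, hrdef]; dsimp only; ring)
  have hE2re : ∀ θ : ℝ, (F θ * Complex.exp (-((-1:ℤ) : ℂ) * θ * Complex.I)).re
      = r θ * Real.cos θ - g θ * Real.sin θ := by
    intro θ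
    rw [he2, Complex.mul_re, Complex.exp_ofReal_mul_I_re, Complex.exp_ofReal_mul_I_im]
    all_goals (rw [hgdef, hrdef]; dsimp only; ring)
  have hE1int : IntervalIntegrable (fun θ : ℝ => F θ * Complex.exp (-((1:ℤ) : ℂ) * θ * Complex.I))
      MeasureTheory.volume (0:ℝ) (2*π) := by
    apply Continuous.intervalIntegrable
    exact hFc.mul (by fun_prop)
  have hE2int : IntervalIntegrable (fun θ : ℝ => F θ * Complex.exp (-((-1:ℤ) : ℂ) * θ * Complex.I))
      MeasureTheory.volume (0:ℝ) (2*π) := by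
    apply Continuous.intervalIntegrable
    exact hFc.mul (by fun_prop)
  have hI1im : (∫ θ in (0:ℝ)..(2*π), (g θ * Real.cos θ - r θ * Real.sin θ)) = 0 := by
    have h := ContinuousLinearMap.intervalIntegral_comp_comm Complex.imCLM hE1int
    simp only [Complex.imCLM_apply] at h
    rw [intervalIntegral.integral_congr (fun θ _ => (hE1im θ).symm), h, hint1, Complex.zero_im]
  have hI1re : (∫ θ in (0:ℝ)..(2*π), (r θ * Real.cos θ + g θ * Real.sin θ)) = 0 := by
    have h := ContinuousLinearMap.intervalIntegral_comp_comm Complex.reCLM hE1int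
    simp only [Complex.reCLM_apply] at h
    rw [intervalIntegral.integral_congr (fun θ _ => (hE1re θ).symm), h, hint1, Complex.zero_re]
  have hI2im : (∫ θ in (0:ℝ)..(2*π), (g θ * Real.cos θ + r θ * Real.sin θ)) = 0 := by
    have h := ContinuousLinearMap.intervalIntegral_comp_comm Complex.imCLM hE2int
    simp only [Complex.imCLM_apply] at h
    rw [intervalIntegral.integral_congr (fun θ _ => (hE2im θ).symm), h, hintm1, Complex.zero_im]
  have hI2re : (∫ θ in (0:ℝ)..(2*π), (r θ * Real.cos θ - g θ * Real.sin θ)) = 0 := by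
    have h := ContinuousLinearMap.intervalIntegral_comp_comm Complex.reCLM hE2int
    simp only [Complex.reCLM_apply] at h
    rw [intervalIntegral.integral_congr (fun θ _ => (hE2re θ).symm), h, hintm1, Complex.zero_re]
  have Hcos : (∫ θ in (0:ℝ)..(2*π), g θ * Real.cos θ) = 0 := by
    have e : (fun θ => (g θ * Real.cos θ - r θ * Real.sin θ) + (g θ * Real.cos θ + r θ * Real.sin θ))
        = (fun θ => (2:ℝ) * (g θ * Real.cos θ)) := by funext θ; ring
    have i1 : IntervalIntegrable (fun θ => g θ * Real.cos θ - r θ * Real.sin θ)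
        MeasureTheory.volume (0:ℝ) (2*π) :=
      ((hgc.mul Real.continuous_cos).sub (hrc.mul Real.continuous_sin)).intervalIntegrable _ _
    have i2 : IntervalIntegrable (fun θ => g θ * Real.cos θ + r θ * Real.sin θ)
        MeasureTheory.volume (0:ℝ) (2*π) :=
      ((hgc.mul Real.continuous_cos).add (hrc.mul Real.continuous_sin)).intervalIntegrable _ _
    have hadd := (intervalIntegral.integral_add i1 i2).symm
    rw [hI1im, hI2im] at hadd
    rw [e, intervalIntegral.integral_const_mul] at hadd
    linarith
  have Hsin : (∫ θ in (0:ℝ)..(2*π), g θ * Real.sin θ) = 0 := by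
    have e : (fun θ => (r θ * Real.cos θ + g θ * Real.sin θ) - (r θ * Real.cos θ - g θ * Real.sin θ))
        = (fun θ => (2:ℝ) * (g θ * Real.sin θ)) := by funext θ; ring
    have i1 : IntervalIntegrable (fun θ => r θ * Real.cos θ + g θ * Real.sin θ)
        MeasureTheory.volume (0:ℝ) (2*π) :=
      ((hrc.mul Real.continuous_cos).add (hgc.mul Real.continuous_sin)).intervalIntegrable _ _
    have i2 : IntervalIntegrable (fun θ => r θ * Real.cos θ - g θ * Real.sin θ)
        MeasureTheory.volume (0:ℝ) (2*π) :=
      ((hrc.mul Real.continuous_cos).sub (hgc.mul Real.continuous_sin)).intervalIntegrable _ _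
    have hsub := (intervalIntegral.integral_sub i1 i2).symm
    rw [hI1re, hI2re] at hsub
    rw [e, intervalIntegral.integral_const_mul] at hsub
    linarith
  -- shift the integrals to a window starting at θ₁
  obtain ⟨θ₁, θ₂, h12, h2p, hA, hB⟩ := hconv
  have HcosS : (∫ θ in θ₁..(θ₁ + 2*π), g θ * Real.cos θ) = 0 := by
    have hper2 : Function.Periodic (fun θ => g θ * Real.cos θ) (2*π) := gper.mul Real.cos_periodic
    rw [hper2.intervalIntegral_add_eq θ₁ 0, zero_add]
    exact Hcos
  have HsinS : (∫ θ in θ₁..(θ₁ + 2*π), g θ * Real.sin θ) = 0 := by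
    have hper2 : Function.Periodic (fun θ => g θ * Real.sin θ) (2*π) := gper.mul Real.sin_periodic
    rw [hper2.intervalIntegral_add_eq θ₁ 0, zero_add]
    exact Hsin
  have hIm : (∫ θ in θ₁..(θ₁ + 2*π), g θ * Real.sin (θ - (θ₁ + θ₂)/2)) = 0 := by
    have e : (fun θ => g θ * Real.sin (θ - (θ₁ + θ₂)/2))
        = fun θ => Real.cos ((θ₁ + θ₂)/2) * (g θ * Real.sin θ)
            - Real.sin ((θ₁ + θ₂)/2) * (g θ * Real.cos θ) := by
      funext θ; rw [Real.sin_sub]; ring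
    rw [e, intervalIntegral.integral_sub (f := fun θ => Real.cos ((θ₁ + θ₂)/2) * (g θ * Real.sin θ)) (g := fun θ => Real.sin ((θ₁ + θ₂)/2) * (g θ * Real.cos θ))
        ((continuous_const.mul (hgc.mul Real.continuous_sin)).intervalIntegrable _ _)
        ((continuous_const.mul (hgc.mul Real.continuous_cos)).intervalIntegrable _ _),
      intervalIntegral.integral_const_mul, intervalIntegral.integral_const_mul, HcosS, HsinS]
    ring
  have hImNeg : (∫ θ in θ₁..(θ₁ + 2*π), (fun θ => -g θ) θ * Real.sin (θ - (θ₁ + θ₂)/2)) = 0 := by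
    have e : (fun θ => (fun θ => -g θ) θ * Real.sin (θ - (θ₁ + θ₂)/2))
        = fun θ => -(g θ * Real.sin (θ - (θ₁ + θ₂)/2)) := by funext θ; ring
    rw [e, intervalIntegral.integral_neg, hIm, neg_zero]
  -- g is constant on [θ₁, θ₁ + 2π]
  have hper1 : g (θ₁ + 2*π) = g θ₁ := gper θ₁
  have hconst : ∃ C, ∀ θ ∈ Set.Icc θ₁ (θ₁ + 2*π), g θ = C := by
    rcases hA with hA | hA <;> rcases hB with hB | hB
    · exact ⟨g θ₁, const_of_monomono h12.le h2p.le hA hB hper1⟩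
    · exact ⟨g θ₂, const_of_updown hgc h12 h2p hA hB hIm⟩
    · have hA' : MonotoneOn (fun θ => -g θ) (Set.Icc θ₁ θ₂) :=
        fun x hx y hy hxy => neg_le_neg (hA hx hy hxy)
      have hB' : AntitoneOn (fun θ => -g θ) (Set.Icc θ₂ (θ₁ + 2*π)) :=
        fun x hx y hy hxy => neg_le_neg (hB hx hy hxy)
      have h := const_of_updown hgc.neg h12 h2p hA' hB' hImNeg
      exact ⟨g θ₂, fun θ hθ => by have := h θ hθ; simp only [Pi.neg_apply, neg_inj, neg_le_neg_iff] at this ⊢; linarith [this]⟩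
    · have hA' : MonotoneOn (fun θ => -g θ) (Set.Icc θ₁ θ₂) :=
        fun x hx y hy hxy => neg_le_neg (hA hx hy hxy)
      have hB' : MonotoneOn (fun θ => -g θ) (Set.Icc θ₂ (θ₁ + 2*π)) :=
        fun x hx y hy hxy => neg_le_neg (hB hx hy hxy)
      have h := const_of_monomono h12.le h2p.le hA' hB' (by show -g (θ₁ + 2*π) = -g θ₁; rw [hper1])
      exact ⟨g θ₁, fun θ hθ => by have := h θ hθ; simp only [neg_inj, neg_le_neg_iff] at this ⊢; linarith [this]⟩
  obtain ⟨C, hC⟩ := hconst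
  -- final contradiction: Re f would be an injective map of the circle into ℝ
  have h2πpos : (0:ℝ) < 2*π := by linarith
  apply no_circle_embed (a := θ₁) h2πpos hrc
  · show r (θ₁ + 2*π) = r θ₁
    rw [hrdef]; dsimp only; rw [hFper]
  · intro s hs t ht hst
    have hgs : g s = C := hC s ⟨hs.1, hs.2.le⟩
    have hgt : g t = C := hC t ⟨ht.1, ht.2.le⟩
    have hFst : F s = F t := Complex.ext hst (hgs.trans hgt.symm)
    have hee : Complex.exp (s * Complex.I) = Complex.exp (t * Complex.I) :=
      hinj (hmem s) (hmem t) hFst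
    rw [Complex.exp_eq_exp_iff_exists_int] at hee
    obtain ⟨n, hn⟩ := hee
    have him : s = t + (n:ℝ) * (2*π) := by
      have := congrArg Complex.im hn
      simpa using this
    have hzero : (n:ℝ) = 0 := by
      rcases lt_trichotomy n 0 with h | h | h
      · have hle : n ≤ -1 := by omega
        have hle' : (n:ℝ) ≤ -1 := by exact_mod_cast hle
        have := mul_le_mul_of_nonneg_right hle' h2πpos.le
        have hb1 := hs.1
        have hb2 := ht.2
        nlinarith
      · rw [h]; simp
      · have hle : 1 ≤ n := by omega
        have hle' : (1:ℝ) ≤ (n:ℝ) := by exact_mod_cast hle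
        have := mul_le_mul_of_nonneg_right hle' h2πpos.le
        have hb1 := hs.2
        have hb2 := ht.1
        nlinarith
    rw [hzero] at him
    linarith
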